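/- Let n ≥ 1, let σ : Fin n → ℝ be an injective function with σ(i) > 0 for all i, let a : Fin n → ℂ, and let f : ℝ → ℂ satisfy f(s) − Σ_{j : Fin n} a(j)·s^{−j} = O(s^{−n}) as s → ∞. For s > 0 let M(s) be the n×n complex matrix with entries M(s)_{i,j} = (σ(i)·s)^{−j} (rows i, columns j, both indexed by Fin n, with exponent j taken as a natural number). Then M(s) is invertible for every s > 0, and for each j : Fin n, the j-th component of the vector M(s)⁻¹ applied to the vector (f(σ(i)·s))_{i : Fin n} differs from a(j) by O(s^{j−n}) as s → ∞. -/

import Mathlib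

open Filter Asymptotics

/-- Multipoint asymptotic inversion (Lemma 4.1): if
`f(s) = Σ_j a(j)·s^{-j} + O(s^{-n})` as `s → ∞`, then the rescaled Vandermonde matrix
`M(s)_{i,j} = (σᵢ s)^{-j}` is invertible for `s > 0`, and applying its inverse to the
sample vector `(f(σᵢ s))ᵢ` recovers each coefficient `a(j)` up to `O(s^{j-n})`. -/
theorem multipoint_asymptotic_inversion
    (n : ℕ) (hn : 1 ≤ n) (σ : Fin n → ℝ) (hσinj : Function.Injective σ)
    (hσpos : ∀ i, 0 < σ i) (a : Fin n → ℂ) (f : ℝ → ℂ)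
    (hf : (fun s : ℝ => f s - ∑ j : Fin n, a j * (s : ℂ) ^ (-(j : ℤ)))
        =O[atTop] fun s : ℝ => (s : ℝ) ^ (-(n : ℤ)))
    (M : ℝ → Matrix (Fin n) (Fin n) ℂ)
    (hM : ∀ s : ℝ, ∀ i j : Fin n, M s i j = ((σ i * s : ℝ) : ℂ) ^ (-(j : ℤ))) :
    (∀ s : ℝ, 0 < s → IsUnit (M s)) ∧
    ∀ j : Fin n,
      (fun s : ℝ => (M s)⁻¹.mulVec (fun i : Fin n => f (σ i * s)) j - a j)
        =O[atTop] fun s : ℝ => (s : ℝ) ^ ((j : ℤ) - (n : ℤ)) := by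
  -- the Vandermonde factor
  set V : Matrix (Fin n) (Fin n) ℂ :=
    Matrix.vandermonde (fun i => ((σ i : ℂ))⁻¹) with hVdef
  have hinj : Function.Injective (fun i => ((σ i : ℂ))⁻¹) := by
    intro i k h
    exact hσinj (Complex.ofReal_injective (inv_injective h))
  have hVdet : V.det ≠ 0 := Matrix.det_vandermonde_ne_zero_iff.mpr hinj
  have hVunit : IsUnit V := by
    rw [Matrix.isUnit_iff_isUnit_det, isUnit_iff_ne_zero]; exact hVdet
  -- factorization M s = V * diagonal (s ^ (-j))
  have hfac : ∀ s : ℝ, M s = V * Matrix.diagonal (fun j : Fin n => (s : ℂ) ^ (-(j : ℤ))) := by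
    intro s
    ext i j
    rw [Matrix.mul_diagonal, hM]
    push_cast
    rw [mul_zpow]
    simp [hVdef, Matrix.vandermonde, zpow_neg, zpow_natCast, inv_pow]
  have hdet : ∀ s : ℝ, 0 < s → IsUnit (M s).det := by
    intro s hs
    rw [hfac s, Matrix.det_mul, Matrix.det_diagonal, isUnit_iff_ne_zero]
    refine mul_ne_zero hVdet (Finset.prod_ne_zero_iff.mpr fun j _ => ?_)
    exact zpow_ne_zero _ (by exact_mod_cast hs.ne')
  have hMunit : ∀ s : ℝ, 0 < s → IsUnit (M s) := fun s hs =>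
    (Matrix.isUnit_iff_isUnit_det _).mpr (hdet s hs)
  refine ⟨hMunit, fun j => ?_⟩
  -- the remainder vector
  set r : ℝ → Fin n → ℂ := fun s i =>
    f (σ i * s) - ∑ k : Fin n, a k * ((σ i * s : ℝ) : ℂ) ^ (-(k : ℤ)) with hrdef
  -- each remainder component is O(s^{-n})
  have hr : ∀ i : Fin n, (fun s : ℝ => r s i) =O[atTop] fun s : ℝ => (s : ℝ) ^ (-(n : ℤ)) := by
    intro i
    have htend : Tendsto (fun s : ℝ => σ i * s) atTop atTop :=
      Tendsto.const_mul_atTop (hσpos i) tendsto_id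
    have h1 : (fun s : ℝ => r s i) =O[atTop] fun s : ℝ => ((σ i * s : ℝ)) ^ (-(n : ℤ)) :=
      hf.comp_tendsto htend
    refine h1.trans ?_
    have heq : (fun s : ℝ => ((σ i * s : ℝ)) ^ (-(n : ℤ)))
        = fun s : ℝ => (σ i) ^ (-(n : ℤ)) * (s : ℝ) ^ (-(n : ℤ)) := by
      funext s; rw [mul_zpow]
    rw [heq]
    exact (isBigO_refl _ _).const_mul_left _
  -- the inverse-Vandermonde combination of remainders
  set e : ℝ → ℂ := fun s => V⁻¹.mulVec (r s) j with hedef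
  have he : e =O[atTop] fun s : ℝ => (s : ℝ) ^ (-(n : ℤ)) := by
    have : e = fun s => ∑ i : Fin n, V⁻¹ j i * r s i := by
      funext s; simp [hedef, Matrix.mulVec, dotProduct]
    rw [this]
    exact Asymptotics.IsBigO.fun_sum fun i _ => (hr i).const_mul_left _
  -- identify the target function for s > 0
  have hkey : ∀ s : ℝ, 0 < s →
      (M s)⁻¹.mulVec (fun i : Fin n => f (σ i * s)) j - a j = (s : ℂ) ^ (j : ℕ) * e s := by
    intro s hs
    have hsC : (s : ℂ) ≠ 0 := by exact_mod_cast hs.ne'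
    have hvec : (fun i : Fin n => f (σ i * s)) = (M s).mulVec a + r s := by
      funext i
      simp only [Pi.add_apply, hrdef, Matrix.mulVec, dotProduct, hM]
      rw [Finset.sum_congr rfl fun (k : Fin n) _ => mul_comm (((σ i * s : ℝ) : ℂ) ^ (-(k : ℤ))) (a k)]
      ring
    rw [hvec, Matrix.mulVec_add, Matrix.mulVec_mulVec, Matrix.nonsing_inv_mul _ (hdet s hs),
      Matrix.one_mulVec]
    have hinv : (M s)⁻¹ = Matrix.diagonal (fun k : Fin n => (s : ℂ) ^ (k : ℕ)) * V⁻¹ := by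
      apply Matrix.inv_eq_right_inv
      rw [hfac s, Matrix.mul_assoc, ← Matrix.mul_assoc (Matrix.diagonal _),
        Matrix.diagonal_mul_diagonal]
      have : (fun k : Fin n => (s : ℂ) ^ (-(k : ℤ)) * (s : ℂ) ^ (k : ℕ)) = fun _ => (1 : ℂ) := by
        funext k
        rw [← zpow_natCast (s : ℂ) (k : ℕ), ← zpow_add₀ hsC]
        simp
      rw [this, Matrix.diagonal_one, Matrix.one_mul, Matrix.mul_nonsing_inv _
        (isUnit_iff_ne_zero.mpr hVdet)]
    simp only [Pi.add_apply, hinv, ← Matrix.mulVec_mulVec, Matrix.mulVec_diagonal, hedef]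
    ring
  -- conclude
  have hO : (fun s : ℝ => (s : ℂ) ^ (j : ℕ) * e s)
      =O[atTop] fun s : ℝ => (s : ℝ) ^ ((j : ℤ) - (n : ℤ)) := by
    have h1 : (fun s : ℝ => (s : ℂ) ^ (j : ℕ)) =O[atTop] fun s : ℝ => (s : ℝ) ^ (j : ℤ) := by
      refine IsBigO.of_bound 1 ?_
      filter_upwards [eventually_ge_atTop (0 : ℝ)] with s hs
      simp [norm_pow, Complex.norm_real, abs_of_nonneg hs, zpow_natCast,
        abs_of_nonneg (pow_nonneg hs _)]
    have h2 := h1.mul he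
    refine h2.trans (IsBigO.of_bound 1 ?_)
    filter_upwards [eventually_gt_atTop (0 : ℝ)] with s hs
    rw [sub_eq_add_neg, zpow_add₀ hs.ne']
    simp
  refine hO.congr' ?_ (EventuallyEq.refl _ _)
  filter_upwards [eventually_gt_atTop (0 : ℝ)] with s hs
  exact (hkey s hs).symm
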